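/- The map α ↦ I_{a⁺}^{α} from (0,∞) to the bounded operators on L¹[a,b] (with the operator norm) is continuous. -/

import Mathlib

open MeasureTheory Set
open scoped ENNReal

/-- Riemann–Liouville fractional integral of order `α` with base point `a`. -/
noncomputable def RL (a α : ℝ) (f : ℝ → ℝ) (t : ℝ) : ℝ :=
  ∫ s in a..t, (t - s) ^ (α - 1) / Real.Gamma α * f s

/-- The kernel of the Riemann–Liouville fractional integral. -/
noncomputable def ker (γ u : ℝ) : ℝ := u ^ (γ - 1) / Real.Gamma γ

lemma measurable_rpow_const (c : ℝ) : Measurable fun x : ℝ => x ^ c := by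
  apply measurable_of_continuousOn_compl_singleton 0
  intro x hx
  exact (Real.continuousAt_rpow_const x c (Or.inl hx)).continuousWithinAt

lemma ker_meas (γ : ℝ) : Measurable (ker γ) :=
  (measurable_rpow_const _).div_const _

lemma rpow_integrableOn {r L : ℝ} (hr : -1 < r) (hL : 0 ≤ L) :
    IntegrableOn (fun u : ℝ => u ^ r) (Ioc 0 L) :=
  (intervalIntegrable_iff_integrableOn_Ioc_of_le hL).mp
    (intervalIntegral.intervalIntegrable_rpow' hr)

lemma ker_integrableOn {γ L : ℝ} (hγ : 0 < γ) (hL : 0 ≤ L) :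
    IntegrableOn (ker γ) (Ioc 0 L) :=
  (rpow_integrableOn (by linarith) hL).div_const _

lemma ker_nonneg {γ : ℝ} (hγ : 0 < γ) {u : ℝ} (hu : 0 ≤ u) : 0 ≤ ker γ u :=
  div_nonneg (Real.rpow_nonneg hu _) (Real.Gamma_pos_of_pos hγ).le

lemma Gamma_continuousAt {x : ℝ} (hx : 0 < x) : ContinuousAt Real.Gamma x := by
  refine (Real.differentiableAt_Gamma fun m => ?_).continuousAt
  have : (0:ℝ) ≤ m := Nat.cast_nonneg m
  intro h; rw [h] at hx; linarith

/-- Continuity in the order of the `L¹` norm of the kernel difference. -/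
lemma C_continuousAt (L : ℝ) (hL : 0 ≤ L) {α : ℝ} (hα : 0 < α) :
    ContinuousAt (fun β => ∫ u in Ioc 0 L, |ker β u - ker α u|) α := by
  obtain ⟨x₀, hx₀m, hmin⟩ :=
    isCompact_Icc.exists_isMinOn (s := Icc (α/2) (3*α/2))
      (nonempty_Icc.mpr (by linarith))
      (fun x hx => (Gamma_continuousAt (by rcases hx with ⟨h1, _⟩; linarith)).continuousWithinAt)
  set c := Real.Gamma x₀ with hc_def
  have hc : 0 < c := Real.Gamma_pos_of_pos (by rcases hx₀m with ⟨h1, _⟩; linarith)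
  apply continuousAt_of_dominated (bound := fun u => (u ^ (α/2 - 1) + u ^ (3*α/2 - 1)) / c + ker α u)
  · exact Filter.Eventually.of_forall fun β =>
      ((ker_meas β).sub (ker_meas α)).abs.aestronglyMeasurable
  · filter_upwards [Metric.ball_mem_nhds α (by positivity : (0:ℝ) < α/2)] with β hβ
    filter_upwards [ae_restrict_mem measurableSet_Ioc] with u hu
    have hu0 : 0 < u := hu.1
    rw [Metric.mem_ball, Real.dist_eq] at hβ
    obtain ⟨hβ1, hβ2⟩ := abs_lt.mp hβ
    have hβpos : 0 < β := by linarith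
    have hΓβ : c ≤ Real.Gamma β := hmin ⟨by linarith, by linarith⟩
    have hnum : u ^ (β - 1) ≤ u ^ (α/2 - 1) + u ^ (3*α/2 - 1) := by
      rcases le_or_gt u 1 with h | h
      · have := Real.rpow_le_rpow_of_exponent_ge hu0 h (by linarith : α/2 - 1 ≤ β - 1)
        have h2 : 0 ≤ u ^ (3*α/2 - 1) := Real.rpow_nonneg hu0.le _
        linarith
      · have := Real.rpow_le_rpow_of_exponent_le h.le (by linarith : β - 1 ≤ 3*α/2 - 1)
        have h2 : 0 ≤ u ^ (α/2 - 1) := Real.rpow_nonneg hu0.le _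
        linarith
    have hk : ker β u ≤ (u ^ (α/2 - 1) + u ^ (3*α/2 - 1)) / c := by
      unfold ker
      exact div_le_div₀ (by positivity) hnum hc hΓβ
    have h1 : |ker β u - ker α u| ≤ ker β u + ker α u := by
      have h2 := ker_nonneg hβpos hu0.le
      have h3 := ker_nonneg hα hu0.le
      rw [abs_sub_le_iff]; constructor <;> linarith
    rw [Real.norm_eq_abs, abs_abs]
    have h3 := ker_nonneg hα hu0.le
    linarith
  · exact (((rpow_integrableOn (by linarith) hL).add
      (rpow_integrableOn (by linarith) hL)).div_const _).add (ker_integrableOn hα hL)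
  · filter_upwards [ae_restrict_mem measurableSet_Ioc] with u hu
    have h1 : ContinuousAt (fun β => ker β u) α := by
      unfold ker
      exact ((Real.continuousAt_const_rpow hu.1.ne').comp
        (continuousAt_id.sub continuousAt_const)).div (Gamma_continuousAt hα)
        (Real.Gamma_pos_of_pos hα).ne'
    exact (h1.sub continuousAt_const).abs

lemma RL_eq (a γ t : ℝ) (f : ℝ → ℝ) (ht : a ≤ t) :
    RL a γ f t = ∫ s in Ioc a t, ker γ (t - s) * f s := by
  rw [RL, intervalIntegral.integral_of_le ht]; rfl

lemma pointwise_bound {a α β : ℝ} {f : ℝ → ℝ}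
    (hfm : Measurable f) {t : ℝ} (ht : a ≤ t) :
    ENNReal.ofReal |RL a β f t - RL a α f t| ≤
      ∫⁻ s in Ioc a t, ENNReal.ofReal |(ker β (t - s) - ker α (t - s)) * f s| := by
  set I := ∫⁻ s in Ioc a t, ENNReal.ofReal |(ker β (t - s) - ker α (t - s)) * f s| with hI_def
  by_cases hI : I = ⊤
  · rw [hI]; exact le_top
  have hkm : ∀ γ : ℝ, Measurable fun s => ker γ (t - s) * f s := fun γ =>
    (((ker_meas γ).comp (measurable_const.sub measurable_id))).mul hfm
  have hgd_meas : Measurable fun s => (ker β (t - s) - ker α (t - s)) * f s :=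
    (((ker_meas β).comp (measurable_const.sub measurable_id)).sub
      ((ker_meas α).comp (measurable_const.sub measurable_id))).mul hfm
  have hgd : IntegrableOn (fun s => (ker β (t - s) - ker α (t - s)) * f s) (Ioc a t) := by
    refine ⟨hgd_meas.aestronglyMeasurable, ?_⟩
    rw [hasFiniteIntegral_iff_norm]
    simp only [Real.norm_eq_abs]
    exact lt_top_iff_ne_top.mpr hI
  by_cases hint : IntegrableOn (fun s => ker β (t - s) * f s) (Ioc a t)
  · have hintα : IntegrableOn (fun s => ker α (t - s) * f s) (Ioc a t) := by
      refine (hint.sub hgd).congr (Filter.Eventually.of_forall fun s => ?_)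
      simp only [Pi.sub_apply]; ring
    rw [RL_eq a β t f ht, RL_eq a α t f ht, ← integral_sub hint hintα]
    have heq : ∀ s, ker β (t - s) * f s - ker α (t - s) * f s
        = (ker β (t - s) - ker α (t - s)) * f s := fun s => by ring
    calc ENNReal.ofReal |∫ s in Ioc a t, (ker β (t - s) * f s - ker α (t - s) * f s)|
        ≤ ENNReal.ofReal (∫ s in Ioc a t, |(ker β (t - s) - ker α (t - s)) * f s|) := by
          apply ENNReal.ofReal_le_ofReal
          simp_rw [heq]
          simpa only [Real.norm_eq_abs] using
            norm_integral_le_integral_norm (μ := volume.restrict (Ioc a t))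
              (fun s => (ker β (t - s) - ker α (t - s)) * f s)
      _ = I := ofReal_integral_eq_lintegral_ofReal hgd.abs
          (Filter.Eventually.of_forall fun s => abs_nonneg _)
  · have hintα : ¬ IntegrableOn (fun s => ker α (t - s) * f s) (Ioc a t) := by
      intro h; apply hint
      refine (h.add hgd).congr (Filter.Eventually.of_forall fun s => ?_)
      simp only [Pi.add_apply]; ring
    have h0β : RL a β f t = 0 := intervalIntegral.integral_undef
      (fun h => hint ((intervalIntegrable_iff_integrableOn_Ioc_of_le ht).mp h))
    have h0α : RL a α f t = 0 := intervalIntegral.integral_undef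
      (fun h => hintα ((intervalIntegrable_iff_integrableOn_Ioc_of_le ht).mp h))
    rw [h0β, h0α]
    simp

lemma main_bound (a b : ℝ) (hab : a ≤ b) {α β : ℝ} (hα : 0 < α) (hβ : 0 < β)
    {f : ℝ → ℝ} (hfm : Measurable f) (hf : IntegrableOn f (Icc a b))
    (hf1 : (∫ t in Icc a b, |f t|) ≤ 1) :
    (∫ t in Icc a b, |RL a β f t - RL a α f t|) ≤
      ∫ u in Ioc 0 (b - a), |ker β u - ker α u| := by
  set C := ∫ u in Ioc 0 (b - a), |ker β u - ker α u| with hC_def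
  have hC0 : 0 ≤ C := integral_nonneg fun u => abs_nonneg _
  by_cases habs : Integrable (fun t => |RL a β f t - RL a α f t|) (volume.restrict (Icc a b))
  swap
  · rw [integral_undef habs]; exact hC0
  rw [integral_eq_lintegral_of_nonneg_ae (Filter.Eventually.of_forall fun t => abs_nonneg _)
    habs.aestronglyMeasurable]
  rw [← ENNReal.toReal_ofReal hC0]
  apply ENNReal.toReal_mono ENNReal.ofReal_ne_top
  set G : ℝ × ℝ → ℝ≥0∞ := fun p =>
    ENNReal.ofReal |(ker β (p.1 - p.2) - ker α (p.1 - p.2)) * f p.2| with hG_def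
  have hGmeas : Measurable G := by
    apply Measurable.ennreal_ofReal
    apply Measurable.abs
    exact (((ker_meas β).comp (measurable_fst.sub measurable_snd)).sub
      ((ker_meas α).comp (measurable_fst.sub measurable_snd))).mul (hfm.comp measurable_snd)
  set T : Set (ℝ × ℝ) := {p | a < p.2 ∧ p.2 ≤ p.1} with hT_def
  have hTmeas : MeasurableSet T := by
    exact MeasurableSet.inter (measurableSet_lt measurable_const measurable_snd)
      (measurableSet_le measurable_snd measurable_fst)
  set F : ℝ → ℝ → ℝ≥0∞ := fun t s => T.indicator G (t, s) with hF_def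
  have hK_int : IntegrableOn (fun u => |ker β u - ker α u|) (Ioc 0 (b - a)) :=
    ((ker_integrableOn hβ (by linarith)).sub (ker_integrableOn hα (by linarith))).abs
  have hCl : ∫⁻ u in Ioc 0 (b - a), ENNReal.ofReal |ker β u - ker α u| = ENNReal.ofReal C :=
    (ofReal_integral_eq_lintegral_ofReal hK_int
      (Filter.Eventually.of_forall fun u => abs_nonneg _)).symm
  calc ∫⁻ t in Icc a b, ENNReal.ofReal |RL a β f t - RL a α f t|
      ≤ ∫⁻ t in Icc a b, ∫⁻ s in Icc a b, F t s := by
        apply lintegral_mono_ae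
        filter_upwards [ae_restrict_mem measurableSet_Icc] with t htm
        refine le_trans (pointwise_bound hfm htm.1) (le_of_eq ?_)
        have hind : ∀ s : ℝ, F t s = (Ioc a t).indicator (fun s => G (t, s)) s := by
          intro s
          by_cases h : s ∈ Ioc a t
          · rw [indicator_of_mem h]
            exact indicator_of_mem (by exact ⟨h.1, h.2⟩) G
          · rw [indicator_of_notMem h]
            refine indicator_of_notMem ?_ G
            simpa [hT_def, mem_Ioc] using h
        simp_rw [hind]
        rw [lintegral_indicator measurableSet_Ioc,
          Measure.restrict_restrict measurableSet_Ioc,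
          inter_eq_self_of_subset_left
            (Ioc_subset_Icc_self.trans (Icc_subset_Icc_right htm.2))]
    _ = ∫⁻ s in Icc a b, ∫⁻ t in Icc a b, F t s :=
        lintegral_lintegral_swap (hGmeas.indicator hTmeas).aemeasurable
    _ ≤ ∫⁻ s in Icc a b, ENNReal.ofReal C * ENNReal.ofReal |f s| := by
        apply lintegral_mono_ae
        filter_upwards [ae_restrict_mem measurableSet_Icc] with s hsm
        have hemb : MeasurableEmbedding (fun u : ℝ => u + s) :=
          (Homeomorph.addRight s).isClosedEmbedding.measurableEmbedding
        have hset : (fun u : ℝ => u + s) ⁻¹' (Ioc s (s + (b - a))) = Ioc 0 (b - a) := by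
          ext u
          simp only [mem_preimage, mem_Ioc]
          constructor
          · rintro ⟨h1, h2⟩; constructor <;> linarith
          · rintro ⟨h1, h2⟩; constructor <;> linarith
        have htrans := (measurePreserving_add_right volume s).setLIntegral_comp_preimage_emb hemb
          (fun t => ENNReal.ofReal |ker β (t - s) - ker α (t - s)| * ENNReal.ofReal |f s|)
          (Ioc s (s + (b - a)))
        rw [hset] at htrans
        simp only [add_sub_cancel_right] at htrans
        calc ∫⁻ t in Icc a b, F t s
            ≤ ∫⁻ t in Icc a b, (Icc s (s + (b - a))).indicator
                (fun t => ENNReal.ofReal |ker β (t - s) - ker α (t - s)|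
                  * ENNReal.ofReal |f s|) t := by
              apply lintegral_mono_ae
              filter_upwards [ae_restrict_mem measurableSet_Icc] with t htm
              by_cases hts : (t, s) ∈ T
              · have h1 : t ∈ Icc s (s + (b - a)) :=
                  ⟨hts.2, by rcases htm with ⟨_, h⟩; rcases hsm with ⟨h', _⟩; linarith⟩
                rw [indicator_of_mem h1]
                refine le_of_eq ?_
                rw [hF_def]
                simp only [indicator_of_mem hts]
                rw [hG_def]
                simp only [abs_mul]
                exact ENNReal.ofReal_mul (abs_nonneg _)
              · rw [hF_def]
                simp only [indicator_of_notMem hts]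
                exact zero_le
          _ ≤ ∫⁻ t, (Icc s (s + (b - a))).indicator
                (fun t => ENNReal.ofReal |ker β (t - s) - ker α (t - s)|
                  * ENNReal.ofReal |f s|) t ∂volume :=
              lintegral_mono' Measure.restrict_le_self (le_refl _)
          _ = ∫⁻ t in Icc s (s + (b - a)),
                ENNReal.ofReal |ker β (t - s) - ker α (t - s)| * ENNReal.ofReal |f s| :=
              lintegral_indicator measurableSet_Icc _
          _ = ∫⁻ t in Ioc s (s + (b - a)),
                ENNReal.ofReal |ker β (t - s) - ker α (t - s)| * ENNReal.ofReal |f s| :=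
              (setLIntegral_congr Ioc_ae_eq_Icc).symm
          _ = ∫⁻ u in Ioc 0 (b - a),
                ENNReal.ofReal |ker β u - ker α u| * ENNReal.ofReal |f s| := htrans.symm
          _ = (∫⁻ u in Ioc 0 (b - a), ENNReal.ofReal |ker β u - ker α u|)
                * ENNReal.ofReal |f s| :=
              lintegral_mul_const _ ((ker_meas β).sub (ker_meas α)).abs.ennreal_ofReal
          _ = ENNReal.ofReal C * ENNReal.ofReal |f s| := by rw [hCl]
    _ = ENNReal.ofReal C * ∫⁻ s in Icc a b, ENNReal.ofReal |f s| :=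
        lintegral_const_mul' _ _ ENNReal.ofReal_ne_top
    _ ≤ ENNReal.ofReal C * 1 := by
        refine mul_le_mul_right ?_ _
        rw [← ofReal_integral_eq_lintegral_ofReal hf.abs
          (Filter.Eventually.of_forall fun s => abs_nonneg _)]
        exact le_trans (ENNReal.ofReal_le_ofReal hf1) (by simp)
    _ = ENNReal.ofReal C := mul_one _

/-- The map `α ↦ I_{a⁺}^α` from `(0,∞)` to bounded operators on `L¹[a,b]` is continuous
for the operator norm. -/
theorem RL_continuous_in_order (a b : ℝ) (hab : a ≤ b) :
    ∀ α > 0, ∀ ε > 0, ∃ δ > 0, ∀ β > 0, |β - α| < δ →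
      ∀ f : ℝ → ℝ, IntegrableOn f (Icc a b) → (∫ t in Icc a b, |f t|) ≤ 1 →
        (∫ t in Icc a b, |RL a β f t - RL a α f t|) ≤ ε := by
  intro α hα ε hε
  have hL : (0:ℝ) ≤ b - a := by linarith
  have hcont := C_continuousAt (b - a) hL hα
  have hCα : (∫ u in Ioc 0 (b - a), |ker α u - ker α u|) = 0 := by simp
  rw [Metric.continuousAt_iff] at hcont
  obtain ⟨δ, hδ, hδ'⟩ := hcont ε hε
  refine ⟨δ, hδ, ?_⟩
  intro β hβ hdist f hf hf1
  have hCβ : (∫ u in Ioc 0 (b - a), |ker β u - ker α u|) ≤ ε := by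
    have h := hδ' (show dist β α < δ by rwa [Real.dist_eq])
    rw [hCα, Real.dist_eq, sub_zero] at h
    exact le_of_lt (lt_of_le_of_lt (le_abs_self _) h)
  set g := hf.1.mk f with hg_def
  have hgm : Measurable g := hf.1.stronglyMeasurable_mk.measurable
  have heq : f =ᵐ[volume.restrict (Icc a b)] g := hf.1.ae_eq_mk
  have hgint : IntegrableOn g (Icc a b) := hf.congr heq
  have hg1 : (∫ t in Icc a b, |g t|) ≤ 1 := by
    have h : (∫ t in Icc a b, |f t|) = ∫ t in Icc a b, |g t| :=
      integral_congr_ae (heq.mono fun x hx => by dsimp; rw [hx])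
    rw [← h]; exact hf1
  have himp : ∀ᵐ x ∂volume, x ∈ Icc a b → f x = g x := ae_imp_of_ae_restrict heq
  have hRL : ∀ γ : ℝ, ∀ t ∈ Icc a b, RL a γ f t = RL a γ g t := by
    intro γ t htm
    apply intervalIntegral.integral_congr_ae
    filter_upwards [himp] with x hx hxmem
    rw [uIoc_of_le htm.1] at hxmem
    rw [hx ((Ioc_subset_Icc_self.trans (Icc_subset_Icc_right htm.2)) hxmem)]
  have hmain := main_bound a b hab hα hβ hgm hgint hg1
  calc (∫ t in Icc a b, |RL a β f t - RL a α f t|)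
      = ∫ t in Icc a b, |RL a β g t - RL a α g t| := by
        apply setIntegral_congr_fun measurableSet_Icc
        intro t htm
        dsimp only
        rw [hRL β t htm, hRL α t htm]
    _ ≤ ∫ u in Ioc 0 (b - a), |ker β u - ker α u| := hmain
    _ ≤ ε := hCβ
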